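/- arXiv:math/0506215 — 2 statements merged into one kernel-verified Lean document; each statement's English description precedes it below -/
import Mathlib

section
/- For an even integer m, a complex Banach space X, p ≥ 1 and v_1,…,v_n ∈ X: ∫_{(Z_m)^n} ‖Σ_{j=1}^n e^{2πi x_j/m} v_j‖^p dμ(x) ≥ (1/2^p) · E_ε ‖Σ_{j=1}^n ε_j v_j‖^p, where μ is uniform on (Z_m)^n and ε uniform on {−1,1}^n. -/
open Finset

/-- Average over the uniform probability measure on `(ZMod m)^n`. -/
noncomputable def zavg (n m : ℕ) [NeZero m] (g : (Fin n → ZMod m) → ℝ) : ℝ :=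
  (∑ x : Fin n → ZMod m, g x) / (m : ℝ) ^ n

/-- Expectation over uniform `ε ∈ {-1,1}^n` (encoded by `Bool`). -/
noncomputable def eavg (n : ℕ) (g : (Fin n → Bool) → ℝ) : ℝ :=
  (∑ ε : Fin n → Bool, g ε) / 2 ^ n

/-- The sign `±1 ∈ ℝ` associated to a Boolean. -/
def sgnR (b : Bool) : ℝ := if b then 1 else -1

/-- The character `a ↦ e^{2πia/m}` of `ZMod m`. -/
noncomputable def chr (m : ℕ) (a : ZMod m) : ℂ :=
  Complex.exp (2 * Real.pi * Complex.I * (a.val : ℂ) / m)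

/-! ### Auxiliary lemmas about `chr` -/

lemma chr_eq_pow (m : ℕ) [NeZero m] (a : ZMod m) :
    chr m a = Complex.exp (2 * Real.pi * Complex.I / m) ^ a.val := by
  rw [chr, ← Complex.exp_nat_mul]
  ring_nf

lemma zeta_pow_m (m : ℕ) [NeZero m] :
    Complex.exp (2 * Real.pi * Complex.I / m) ^ m = 1 := by
  rw [← Complex.exp_nat_mul, mul_div_cancel₀ _ (by exact_mod_cast (NeZero.ne m) : (m:ℂ) ≠ 0),
    Complex.exp_two_pi_mul_I]

lemma zeta_pow_mod (m : ℕ) [NeZero m] (k : ℕ) :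
    Complex.exp (2 * Real.pi * Complex.I / m) ^ (k % m)
      = Complex.exp (2 * Real.pi * Complex.I / m) ^ k := by
  conv_rhs => rw [← Nat.mod_add_div k m]
  rw [pow_add, pow_mul, zeta_pow_m, one_pow, mul_one]

lemma chr_add (m : ℕ) [NeZero m] (a b : ZMod m) : chr m (a + b) = chr m a * chr m b := by
  rw [chr_eq_pow, chr_eq_pow, chr_eq_pow, ZMod.val_add, zeta_pow_mod, pow_add]

lemma chr_zero (m : ℕ) [NeZero m] : chr m 0 = 1 := by
  rw [chr_eq_pow, ZMod.val_zero, pow_zero]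

lemma chr_half (m : ℕ) [NeZero m] (hm : Even m) : chr m ((m/2 : ℕ) : ZMod m) = -1 := by
  obtain ⟨k, hk⟩ := hm
  have hk' : m = 2 * k := by omega
  have hk0 : 0 < k := by have := Nat.pos_of_ne_zero (NeZero.ne m); omega
  rw [chr, ZMod.val_natCast_of_lt (by omega : m / 2 < m)]
  have : (2 * Real.pi * Complex.I * ((m/2 : ℕ) : ℂ) / m) = Real.pi * Complex.I := by
    have h1 : ((m/2 : ℕ) : ℂ) = (k : ℂ) := by rw [hk']; norm_num
    have h2 : (m : ℂ) = 2 * k := by exact_mod_cast congrArg (Nat.cast : ℕ → ℂ) hk'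
    have hk0' : (k : ℂ) ≠ 0 := by exact_mod_cast hk0.ne'
    rw [h1, h2]
    field_simp
  rw [this, Complex.exp_pi_mul_I]

lemma chr_conj_mul (m : ℕ) [NeZero m] (a : ZMod m) :
    (starRingEnd ℂ) (chr m a) * chr m a = 1 := by
  rw [chr, ← Complex.exp_conj, ← Complex.exp_add]
  have : (starRingEnd ℂ) (2 * Real.pi * Complex.I * ((a.val : ℕ) : ℂ) / m) =
      -(2 * Real.pi * Complex.I * ((a.val : ℕ) : ℂ) / m) := by
    simp only [map_div₀, map_mul, Complex.conj_I, Complex.conj_natCast, Complex.conj_ofReal,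
      map_ofNat]
    ring
  rw [this, neg_add_cancel, Complex.exp_zero]

lemma chr_abs (m : ℕ) [NeZero m] (a : ZMod m) : ‖chr m a‖ = 1 := by
  have h := congrArg (‖·‖) (chr_conj_mul m a)
  rw [norm_mul, Complex.norm_conj, norm_one] at h
  rcases mul_self_eq_one_iff.mp h with h1 | h1
  · exact h1
  · have := norm_nonneg (chr m a)
    linarith

/-! ### Sign manipulation -/

lemma sgnR_mul (a b : Bool) : sgnR a * sgnR b = sgnR (a == b) := by
  cases a <;> cases b <;> simp [sgnR]

lemma sgnR_sq (b : Bool) : sgnR b * sgnR b = 1 := by cases b <;> simp [sgnR]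

lemma beq_invol {n : ℕ} (δ : Fin n → Bool) :
    Function.Involutive (fun ε : Fin n → Bool => fun j => (ε j == δ j)) := by
  intro ε
  funext j
  show ((ε j == δ j) == δ j) = ε j
  cases ε j <;> cases δ j <;> rfl

/-! ### Contraction principle -/

lemma contraction_real {X : Type*} [NormedAddCommGroup X] [NormedSpace ℝ X] {p : ℝ} (hp : 1 ≤ p)
    {n : ℕ} (w : Fin n → X) (r : Fin n → ℝ) (hr : ∀ j, |r j| ≤ 1) :
    ∑ ε : Fin n → Bool, ‖∑ j, sgnR (ε j) • (r j • w j)‖ ^ p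
      ≤ ∑ ε : Fin n → Bool, ‖∑ j, sgnR (ε j) • w j‖ ^ p := by
  set lam : (Fin n → Bool) → ℝ := fun δ => ∏ j, (1 + sgnR (δ j) * r j) / 2 with hlam
  have hfnn : ∀ (j : Fin n) (b : Bool), 0 ≤ (1 + sgnR b * r j) / 2 := by
    intro j b
    have := abs_le.1 (hr j)
    cases b <;> simp [sgnR] <;> nlinarith [this.1, this.2]
  have hlamnn : ∀ δ, 0 ≤ lam δ := fun δ => Finset.prod_nonneg fun j _ => hfnn j (δ j)
  have hsum : ∑ δ : Fin n → Bool, lam δ = 1 := by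
    have hps := Finset.prod_univ_sum (fun _ : Fin n => (Finset.univ : Finset Bool))
      (fun j b => (1 + sgnR b * r j) / 2)
    rw [Fintype.piFinset_univ] at hps
    rw [hlam, ← hps]
    have : ∀ j : Fin n, (∑ b : Bool, (1 + sgnR b * r j) / 2) = 1 := by
      intro j; simp [Fintype.sum_bool, sgnR]; ring
    rw [Finset.prod_congr rfl fun j _ => this j, Finset.prod_const_one]
  have hmarg : ∀ j0 : Fin n, ∑ δ : Fin n → Bool, lam δ * sgnR (δ j0) = r j0 := by
    intro j0
    have step : ∀ δ : Fin n → Bool, lam δ * sgnR (δ j0)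
        = ∏ j, ((1 + sgnR (δ j) * r j) / 2 * (if j = j0 then sgnR (δ j) else 1)) := by
      intro δ
      rw [Finset.prod_mul_distrib, Finset.prod_ite_eq' Finset.univ j0 (fun j => sgnR (δ j))]
      simp [hlam]
    calc ∑ δ : Fin n → Bool, lam δ * sgnR (δ j0)
        = ∑ δ ∈ Fintype.piFinset (fun _ : Fin n => (Finset.univ : Finset Bool)),
            ∏ j, ((1 + sgnR (δ j) * r j) / 2 * (if j = j0 then sgnR (δ j) else 1)) := by
          rw [Fintype.piFinset_univ]; exact Finset.sum_congr rfl fun δ _ => step δ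
      _ = ∏ j, ∑ b : Bool, ((1 + sgnR b * r j) / 2 * (if j = j0 then sgnR b else 1)) :=
          (Finset.prod_univ_sum (fun _ : Fin n => (Finset.univ : Finset Bool))
            (fun j b => (1 + sgnR b * r j) / 2 * (if j = j0 then sgnR b else 1))).symm
      _ = ∏ j, (if j = j0 then r j0 else 1) := by
          refine Finset.prod_congr rfl fun j _ => ?_
          by_cases h : j = j0 <;> simp [h, Fintype.sum_bool, sgnR] <;> ring
      _ = r j0 := by simp
  set T := ∑ ε : Fin n → Bool, ‖∑ j, sgnR (ε j) • w j‖ ^ p with hT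
  have hreindex : ∀ δ : Fin n → Bool,
      ∑ ε : Fin n → Bool, ‖∑ j, (sgnR (ε j) * sgnR (δ j)) • w j‖ ^ p = T := by
    intro δ
    rw [hT]
    refine Fintype.sum_equiv (beq_invol δ).toPerm _ _ fun ε => ?_
    congr 2
    refine Finset.sum_congr rfl fun j _ => ?_
    rw [sgnR_mul]
    rfl
  have key : ∀ ε : Fin n → Bool, (∑ j, sgnR (ε j) • (r j • w j))
      = ∑ δ : Fin n → Bool, lam δ • (∑ j, (sgnR (ε j) * sgnR (δ j)) • w j) := by
    intro ε
    have : ∀ δ : Fin n → Bool, lam δ • (∑ j, (sgnR (ε j) * sgnR (δ j)) • w j)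
        = ∑ j, ((lam δ * sgnR (δ j)) * sgnR (ε j)) • w j := by
      intro δ
      rw [Finset.smul_sum]
      refine Finset.sum_congr rfl fun j _ => ?_
      rw [smul_smul]
      ring_nf
    rw [Finset.sum_congr rfl fun δ _ => this δ, Finset.sum_comm]
    refine Finset.sum_congr rfl fun j _ => ?_
    rw [← Finset.sum_smul, ← Finset.sum_mul, hmarg j, smul_smul, mul_comm]
  calc ∑ ε : Fin n → Bool, ‖∑ j, sgnR (ε j) • (r j • w j)‖ ^ p
      ≤ ∑ ε : Fin n → Bool, ∑ δ : Fin n → Bool,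
          lam δ * ‖∑ j, (sgnR (ε j) * sgnR (δ j)) • w j‖ ^ p := by
        refine Finset.sum_le_sum fun ε _ => ?_
        rw [key ε]
        calc ‖∑ δ : Fin n → Bool, lam δ • (∑ j, (sgnR (ε j) * sgnR (δ j)) • w j)‖ ^ p
            ≤ (∑ δ : Fin n → Bool, lam δ * ‖∑ j, (sgnR (ε j) * sgnR (δ j)) • w j‖) ^ p := by
              refine Real.rpow_le_rpow (norm_nonneg _) ?_ (by linarith)
              refine (norm_sum_le _ _).trans (le_of_eq ?_)
              refine Finset.sum_congr rfl fun δ _ => ?_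
              rw [norm_smul, Real.norm_eq_abs, abs_of_nonneg (hlamnn δ)]
          _ ≤ ∑ δ : Fin n → Bool, lam δ * ‖∑ j, (sgnR (ε j) * sgnR (δ j)) • w j‖ ^ p :=
              Real.rpow_arith_mean_le_arith_mean_rpow _ _ _ (fun δ _ => hlamnn δ) hsum
                (fun δ _ => norm_nonneg _) hp
    _ = ∑ δ : Fin n → Bool, lam δ *
          ∑ ε : Fin n → Bool, ‖∑ j, (sgnR (ε j) * sgnR (δ j)) • w j‖ ^ p := by
        rw [Finset.sum_comm]
        exact Finset.sum_congr rfl fun δ _ => (Finset.mul_sum _ _ _).symm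
    _ = ∑ δ : Fin n → Bool, lam δ * T :=
        Finset.sum_congr rfl fun δ _ => by rw [hreindex δ]
    _ = T := by rw [← Finset.sum_mul, hsum, one_mul]

lemma add_rpow_le {p : ℝ} (hp : 1 ≤ p) (x y : ℝ) (hx : 0 ≤ x) (hy : 0 ≤ y) :
    (x + y) ^ p ≤ 2 ^ (p - 1) * (x ^ p + y ^ p) := by
  have h := NNReal.rpow_add_le_mul_rpow_add_rpow x.toNNReal y.toNNReal hp
  have := NNReal.coe_le_coe.2 h
  push_cast at this
  rwa [Real.coe_toNNReal x hx, Real.coe_toNNReal y hy] at this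

lemma contraction_complex {X : Type*} [NormedAddCommGroup X] [NormedSpace ℂ X] {p : ℝ}
    (hp : 1 ≤ p) {n : ℕ} (w : Fin n → X) (a : Fin n → ℂ) (ha : ∀ j, ‖a j‖ ≤ 1) :
    ∑ ε : Fin n → Bool, ‖∑ j, sgnR (ε j) • (a j • w j)‖ ^ p
      ≤ (2 : ℝ) ^ p * ∑ ε : Fin n → Bool, ‖∑ j, sgnR (ε j) • w j‖ ^ p := by
  set A : (Fin n → Bool) → X := fun ε => ∑ j, sgnR (ε j) • ((a j).re • w j) with hA
  set B : (Fin n → Bool) → X := fun ε => ∑ j, sgnR (ε j) • ((a j).im • w j) with hB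
  have hsplit : ∀ ε : Fin n → Bool,
      (∑ j, sgnR (ε j) • (a j • w j)) = A ε + Complex.I • B ε := by
    intro ε
    rw [hA, hB, Finset.smul_sum, ← Finset.sum_add_distrib]
    refine Finset.sum_congr rfl fun j _ => ?_
    rw [← Complex.coe_smul ((a j).re), ← Complex.coe_smul ((a j).im)]
    rw [smul_comm Complex.I (sgnR (ε j)) _, ← smul_add]
    congr 1
    rw [smul_smul, ← add_smul]
    congr 1
    rw [mul_comm]
    exact (Complex.re_add_im (a j)).symm
  set T := ∑ ε : Fin n → Bool, ‖∑ j, sgnR (ε j) • w j‖ ^ p with hT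
  have hAT : ∑ ε : Fin n → Bool, ‖A ε‖ ^ p ≤ T :=
    contraction_real hp w (fun j => (a j).re) fun j => (Complex.abs_re_le_norm (a j)).trans (ha j)
  have hBT : ∑ ε : Fin n → Bool, ‖B ε‖ ^ p ≤ T :=
    contraction_real hp w (fun j => (a j).im) fun j => (Complex.abs_im_le_norm (a j)).trans (ha j)
  calc ∑ ε : Fin n → Bool, ‖∑ j, sgnR (ε j) • (a j • w j)‖ ^ p
      ≤ ∑ ε : Fin n → Bool, 2 ^ (p - 1) * (‖A ε‖ ^ p + ‖B ε‖ ^ p) := by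
        refine Finset.sum_le_sum fun ε _ => ?_
        rw [hsplit ε]
        calc ‖A ε + Complex.I • B ε‖ ^ p ≤ (‖A ε‖ + ‖B ε‖) ^ p := by
              refine Real.rpow_le_rpow (norm_nonneg _) ?_ (by linarith)
              refine (norm_add_le _ _).trans ?_
              rw [norm_smul, Complex.norm_I, one_mul]
          _ ≤ 2 ^ (p - 1) * (‖A ε‖ ^ p + ‖B ε‖ ^ p) :=
              add_rpow_le hp _ _ (norm_nonneg _) (norm_nonneg _)
    _ = 2 ^ (p - 1) * (∑ ε : Fin n → Bool, ‖A ε‖ ^ p + ∑ ε : Fin n → Bool, ‖B ε‖ ^ p) := by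
        rw [← Finset.mul_sum, Finset.sum_add_distrib]
    _ ≤ 2 ^ (p - 1) * (T + T) := by
        refine mul_le_mul_of_nonneg_left (add_le_add hAT hBT) ?_
        positivity
    _ = (2 : ℝ) ^ p * T := by
        have h2 : (2 : ℝ) ^ (p - 1) * 2 = 2 ^ p := by
          have h := Real.rpow_add (by norm_num : (0:ℝ) < 2) 1 (p - 1)
          rw [Real.rpow_one] at h
          rw [mul_comm, ← h]
          norm_num
        rw [← two_mul, ← mul_assoc, mul_comm ((2:ℝ) ^ (p-1)) 2, mul_comm 2 ((2:ℝ) ^ (p-1)), h2]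

/-! ### Shift invariance -/

lemma shift_sum {X : Type*} [NormedAddCommGroup X] [NormedSpace ℂ X] {p : ℝ}
    {n m : ℕ} [NeZero m] (hm : Even m) (v : Fin n → X) (ε : Fin n → Bool) :
    ∑ x : Fin n → ZMod m, ‖∑ j, chr m (x j) • v j‖ ^ p
      = ∑ x : Fin n → ZMod m, ‖∑ j, sgnR (ε j) • (chr m (x j) • v j)‖ ^ p := by
  set c : Fin n → ZMod m := fun j => if ε j then 0 else ((m/2 : ℕ) : ZMod m) with hc
  have hcc : ∀ j, chr m (c j) = ((sgnR (ε j) : ℝ) : ℂ) := by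
    intro j
    rw [hc]
    cases h : ε j <;> simp [h, sgnR, chr_zero, chr_half m hm]
  refine Fintype.sum_equiv (Equiv.addRight c) _ _ fun x => ?_
  congr 2
  refine Finset.sum_congr rfl fun j _ => ?_
  show chr m (x j) • v j = sgnR (ε j) • (chr m (x j + c j) • v j)
  rw [chr_add, hcc j, mul_comm, mul_smul, Complex.coe_smul, smul_smul, sgnR_sq, one_smul]

/-! ### The main theorem -/

theorem stmt3 (X : Type*) [NormedAddCommGroup X] [NormedSpace ℂ X]
    (p : ℝ) (hp : 1 ≤ p) (n m : ℕ) [NeZero m] (hm : Even m) (hm0 : 0 < m)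
    (v : Fin n → X) :
    (zavg n m fun x => ‖∑ j, chr m (x j) • v j‖ ^ p)
      ≥ (1 / 2 ^ p) * eavg n fun ε => ‖∑ j, sgnR (ε j) • v j‖ ^ p := by
  set G := ∑ x : Fin n → ZMod m, ‖∑ j, chr m (x j) • v j‖ ^ p with hG
  set H := ∑ ε : Fin n → Bool, ‖∑ j, sgnR (ε j) • v j‖ ^ p with hH
  have hGnn : 0 ≤ G := Finset.sum_nonneg fun x _ =>
    Real.rpow_nonneg (norm_nonneg _) p
  have hHnn : 0 ≤ H := Finset.sum_nonneg fun ε _ =>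
    Real.rpow_nonneg (norm_nonneg _) p
  have h2p : (0:ℝ) < 2 ^ p := Real.rpow_pos_of_pos (by norm_num) p
  -- per x contraction
  have key2 : ∀ x : Fin n → ZMod m,
      H ≤ 2 ^ p * ∑ ε : Fin n → Bool, ‖∑ j, sgnR (ε j) • (chr m (x j) • v j)‖ ^ p := by
    intro x
    have := contraction_complex hp (fun j => chr m (x j) • v j)
      (fun j => (starRingEnd ℂ) (chr m (x j)))
      (fun j => by rw [Complex.norm_conj, chr_abs])
    have heq : ∀ ε : Fin n → Bool,
        (∑ j, sgnR (ε j) • ((starRingEnd ℂ) (chr m (x j)) • (chr m (x j) • v j)))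
          = ∑ j, sgnR (ε j) • v j := by
      intro ε
      refine Finset.sum_congr rfl fun j _ => ?_
      rw [smul_smul, chr_conj_mul, one_smul]
    rw [Finset.sum_congr rfl fun ε _ => by rw [heq ε]] at this
    rwa [hH]
  -- main counting identity
  have main : (m : ℝ) ^ n * H ≤ 2 ^ p * ((2 : ℝ) ^ n * G) := by
    have hcardZ : (Fintype.card (Fin n → ZMod m) : ℝ) = (m : ℝ) ^ n := by
      simp [ZMod.card]
    have hcardB : (Fintype.card (Fin n → Bool) : ℝ) = (2 : ℝ) ^ n := by
      simp
    calc (m : ℝ) ^ n * H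
        = ∑ _x : Fin n → ZMod m, H := by
          rw [Finset.sum_const, nsmul_eq_mul, Finset.card_univ, hcardZ]
      _ ≤ ∑ x : Fin n → ZMod m,
            2 ^ p * ∑ ε : Fin n → Bool, ‖∑ j, sgnR (ε j) • (chr m (x j) • v j)‖ ^ p :=
          Finset.sum_le_sum fun x _ => key2 x
      _ = 2 ^ p * ∑ x : Fin n → ZMod m,
            ∑ ε : Fin n → Bool, ‖∑ j, sgnR (ε j) • (chr m (x j) • v j)‖ ^ p := by
          rw [Finset.mul_sum]
      _ = 2 ^ p * ∑ ε : Fin n → Bool,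
            ∑ x : Fin n → ZMod m, ‖∑ j, sgnR (ε j) • (chr m (x j) • v j)‖ ^ p := by
          rw [Finset.sum_comm]
      _ = 2 ^ p * ∑ _ε : Fin n → Bool, G := by
          congr 1
          exact Finset.sum_congr rfl fun ε _ => (shift_sum hm v ε).symm
      _ = 2 ^ p * ((2 : ℝ) ^ n * G) := by
          rw [Finset.sum_const, nsmul_eq_mul, Finset.card_univ, hcardB]
  -- divide through
  rw [ge_iff_le, zavg, eavg, ← hG, ← hH]
  have hmn : (0:ℝ) < (m : ℝ) ^ n := by positivity
  have h2n : (0:ℝ) < (2 : ℝ) ^ n := by positivity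
  rw [show (1:ℝ) / 2 ^ p * (H / 2 ^ n) = (1 / 2 ^ p * H) / 2 ^ n from by ring,
    div_le_div_iff₀ h2n hmn]
  calc 1 / 2 ^ p * H * (m : ℝ) ^ n ≤ G * 2 ^ n := by
        rw [div_mul_eq_mul_div, one_mul, div_mul_eq_mul_div, div_le_iff₀ h2p]
        calc H * (m : ℝ) ^ n = (m : ℝ) ^ n * H := by ring
          _ ≤ 2 ^ p * ((2:ℝ) ^ n * G) := main
          _ = G * 2 ^ n * 2 ^ p := by ring
    _ = G * 2 ^ n := rfl
end

section
/- Averaging operator approximation lemma: let k be odd, m > 2k even, and define A^{(k)}f(x) = k^{−n} Σ_{z ∈ (−k,k)^n ∩ (2ℤ)^n} f(x+z). Then for every f : (Z_m)^n → X and p ≥ 1, ∫ ‖A^{(k)}f(x) − f(x)‖^p dμ(x) ≤ (k−1)^p n^{p−1} Σ_{j=1}^n ∫ ‖f(x+e_j) − f(x)‖^p dμ(x). -/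
set_option maxHeartbeats 1000000

open Finset

/-- The cube `(-k,k)^n ∩ (2ℤ)^n` of integer points with even coordinates. -/
noncomputable def evenCube (k n : ℕ) : Finset (Fin n → ℤ) :=
  Fintype.piFinset fun _ => (Finset.Ioo (-(k : ℤ)) (k : ℤ)).filter (fun a => Even a)

/-- The averaging operator `A^{(k)} f (x) = k^{-n} ∑_{z ∈ (-k,k)^n ∩ (2ℤ)^n} f(x+z)`. -/
noncomputable def Aop (X : Type*) [NormedAddCommGroup X] [NormedSpace ℝ X]
    (k n m : ℕ) (f : (Fin n → ZMod m) → X) (x : Fin n → ZMod m) : X :=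
  (((k : ℝ) ^ n)⁻¹) • ∑ z ∈ evenCube k n, f (x + fun i => ((z i : ZMod m)))

section Aux

variable {n m : ℕ} [NeZero m]

lemma zavg_nonneg {g : (Fin n → ZMod m) → ℝ} (hg : ∀ x, 0 ≤ g x) : 0 ≤ zavg n m g :=
  div_nonneg (Finset.sum_nonneg fun x _ => hg x) (by positivity)

lemma zavg_mono {g h : (Fin n → ZMod m) → ℝ} (hgh : ∀ x, g x ≤ h x) :
    zavg n m g ≤ zavg n m h := by
  unfold zavg
  have hm : (0:ℝ) < (m:ℝ) ^ n := by
    have : 0 < m := Nat.pos_of_ne_zero (NeZero.ne m)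
    have : (0:ℝ) < (m:ℝ) := by exact_mod_cast this
    positivity
  gcongr with x
  exact hgh x

lemma zavg_congr {g h : (Fin n → ZMod m) → ℝ} (hgh : ∀ x, g x = h x) :
    zavg n m g = zavg n m h := by
  unfold zavg
  rw [Finset.sum_congr rfl fun x _ => hgh x]

lemma zavg_sum {ι : Type*} (s : Finset ι) (g : ι → (Fin n → ZMod m) → ℝ) :
    zavg n m (fun x => ∑ i ∈ s, g i x) = ∑ i ∈ s, zavg n m (g i) := by
  unfold zavg
  rw [Finset.sum_comm, Finset.sum_div]

lemma zavg_const_mul (c : ℝ) (g : (Fin n → ZMod m) → ℝ) :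
    zavg n m (fun x => c * g x) = c * zavg n m g := by
  unfold zavg
  rw [← Finset.mul_sum, mul_div_assoc]

lemma zavg_translate (g : (Fin n → ZMod m) → ℝ) (c : Fin n → ZMod m) :
    zavg n m (fun x => g (x + c)) = zavg n m g := by
  unfold zavg
  congr 1
  exact Fintype.sum_equiv (Equiv.addRight c) _ _ (fun x => rfl)

/-- Jensen / power mean inequality, cardinality form. -/
lemma sum_rpow_le {ι : Type*} (s : Finset ι) (g : ι → ℝ) (hg : ∀ i ∈ s, 0 ≤ g i)
    {p : ℝ} (hp : 1 ≤ p) :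
    (∑ i ∈ s, g i) ^ p ≤ (s.card : ℝ) ^ (p - 1) * ∑ i ∈ s, g i ^ p := by
  rcases s.eq_empty_or_nonempty with rfl | hs
  · simp [Real.zero_rpow (by linarith : p ≠ 0)]
  have hc : (0:ℝ) < s.card := by exact_mod_cast hs.card_pos
  have h := Real.rpow_arith_mean_le_arith_mean_rpow s (fun _ => ((s.card : ℝ))⁻¹) g
      (fun i _ => by positivity)
      (by rw [Finset.sum_const, nsmul_eq_mul]; field_simp) hg hp
  rw [← Finset.mul_sum, ← Finset.mul_sum,
    Real.mul_rpow (by positivity) (Finset.sum_nonneg hg)] at h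
  have h2 : (∑ i ∈ s, g i) ^ p
      = (s.card : ℝ) ^ p * (((s.card : ℝ))⁻¹ ^ p * (∑ i ∈ s, g i) ^ p) := by
    rw [← mul_assoc, ← Real.mul_rpow hc.le (by positivity),
      mul_inv_cancel₀ hc.ne', Real.one_rpow, one_mul]
  calc (∑ i ∈ s, g i) ^ p
      = (s.card : ℝ) ^ p * (((s.card : ℝ))⁻¹ ^ p * (∑ i ∈ s, g i) ^ p) := h2
    _ ≤ (s.card : ℝ) ^ p * (((s.card : ℝ))⁻¹ * ∑ i ∈ s, g i ^ p) :=
        mul_le_mul_of_nonneg_left h (Real.rpow_nonneg hc.le p)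
    _ = (s.card : ℝ) ^ (p - 1) * ∑ i ∈ s, g i ^ p := by
        rw [← mul_assoc]
        congr 1
        rw [← Real.rpow_neg_one (s.card : ℝ), ← Real.rpow_add hc]
        ring_nf
    
lemma norm_tele {X : Type*} [NormedAddCommGroup X] {p : ℝ} (hp : 1 ≤ p) (g : ℕ → X) (N : ℕ) :
    ‖g N - g 0‖ ^ p ≤ (N : ℝ) ^ (p - 1) * ∑ a ∈ Finset.range N, ‖g (a+1) - g a‖ ^ p := by
  calc ‖g N - g 0‖ ^ p = ‖∑ a ∈ Finset.range N, (g (a+1) - g a)‖ ^ p := by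
        rw [Finset.sum_range_sub]
    _ ≤ (∑ a ∈ Finset.range N, ‖g (a+1) - g a‖) ^ p :=
        Real.rpow_le_rpow (norm_nonneg _) (norm_sum_le _ _) (by linarith)
    _ ≤ (N : ℝ) ^ (p - 1) * ∑ a ∈ Finset.range N, ‖g (a+1) - g a‖ ^ p := by
        have := sum_rpow_le (Finset.range N) (fun a => ‖g (a+1) - g a‖)
          (fun i _ => norm_nonneg _) hp
        simpa using this

lemma zavg_tele {X : Type*} [NormedAddCommGroup X] {p : ℝ} (hp : 1 ≤ p)
    (G : ℕ → (Fin n → ZMod m) → X) (N : ℕ) :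
    zavg n m (fun x => ‖G N x - G 0 x‖ ^ p)
      ≤ (N : ℝ) ^ (p - 1) * ∑ a ∈ Finset.range N,
          zavg n m (fun x => ‖G (a+1) x - G a x‖ ^ p) := by
  calc zavg n m (fun x => ‖G N x - G 0 x‖ ^ p)
      ≤ zavg n m (fun x => (N : ℝ) ^ (p-1) * ∑ a ∈ Finset.range N, ‖G (a+1) x - G a x‖ ^ p) :=
        zavg_mono (fun x => norm_tele hp (fun a => G a x) N)
    _ = (N : ℝ) ^ (p - 1) * ∑ a ∈ Finset.range N,
          zavg n m (fun x => ‖G (a+1) x - G a x‖ ^ p) := by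
        rw [zavg_const_mul, zavg_sum]

lemma zavg_neg_shift {X : Type*} [NormedAddCommGroup X] {p : ℝ}
    (f : (Fin n → ZMod m) → X) (c : Fin n → ZMod m) :
    zavg n m (fun x => ‖f (x + c) - f x‖ ^ p)
      = zavg n m (fun x => ‖f (x + (-c)) - f x‖ ^ p) := by
  rw [← zavg_translate (fun x => ‖f (x + (-c)) - f x‖ ^ p) c]
  exact zavg_congr fun x => by rw [add_neg_cancel_right, norm_sub_rev]

lemma zavg_shift_pair {X : Type*} [NormedAddCommGroup X] {p : ℝ}
    (f : (Fin n → ZMod m) → X) (c e : Fin n → ZMod m) :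
    zavg n m (fun x => ‖f ((x + c) + e) - f (x + c)‖ ^ p)
      = zavg n m (fun x => ‖f (x + e) - f x‖ ^ p) :=
  zavg_translate (fun y => ‖f (y + e) - f y‖ ^ p) c

lemma step_single {X : Type*} [NormedAddCommGroup X] {p : ℝ} (hp : 1 ≤ p)
    (f : (Fin n → ZMod m) → X) (j : Fin n) (s : ℕ) :
    zavg n m (fun x => ‖f (x + Pi.single j ((s : ZMod m))) - f x‖ ^ p)
      ≤ (s : ℝ) ^ p * zavg n m (fun x => ‖f (x + Pi.single j 1) - f x‖ ^ p) := by
  rcases Nat.eq_zero_or_pos s with rfl | hs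
  · simp [zavg, Real.zero_rpow (by linarith : p ≠ 0)]
  have h := zavg_tele hp (fun a x => f (x + Pi.single j ((a : ZMod m)))) s
  simp only [Nat.cast_zero, Pi.single_zero, add_zero] at h
  have key : ∀ a : ℕ,
      zavg n m (fun x => ‖f (x + Pi.single j (((a+1 : ℕ) : ZMod m)))
        - f (x + Pi.single j ((a : ZMod m)))‖ ^ p)
      = zavg n m (fun x => ‖f (x + Pi.single j 1) - f x‖ ^ p) := by
    intro a
    have hsp : ∀ x : Fin n → ZMod m,
        x + Pi.single j (((a+1 : ℕ) : ZMod m))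
          = (x + Pi.single j ((a : ZMod m))) + Pi.single j 1 := by
      intro x
      push_cast
      rw [Pi.single_add, add_assoc]
    have e1 : zavg n m (fun x => ‖f (x + Pi.single j (((a+1 : ℕ) : ZMod m)))
          - f (x + Pi.single j ((a : ZMod m)))‖ ^ p)
        = zavg n m (fun x => ‖f ((x + Pi.single j ((a : ZMod m))) + Pi.single j 1)
          - f (x + Pi.single j ((a : ZMod m)))‖ ^ p) :=
      zavg_congr fun x => by rw [hsp x]
    rw [e1]
    exact zavg_shift_pair f _ _
  rw [Finset.sum_congr rfl (fun a _ => key a), Finset.sum_const, Finset.card_range,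
    nsmul_eq_mul] at h
  refine h.trans (le_of_eq ?_)
  rw [← mul_assoc]
  congr 1
  have hs' : (0:ℝ) < s := by exact_mod_cast hs
  nth_rewrite 2 [← Real.rpow_one (s:ℝ)]
  rw [← Real.rpow_add hs']
  norm_num

lemma step_int {X : Type*} [NormedAddCommGroup X] {p : ℝ} (hp : 1 ≤ p)
    (f : (Fin n → ZMod m) → X) (j : Fin n) (t : ℤ) :
    zavg n m (fun x => ‖f (x + Pi.single j ((t : ZMod m))) - f x‖ ^ p)
      ≤ |(t : ℝ)| ^ p * zavg n m (fun x => ‖f (x + Pi.single j 1) - f x‖ ^ p) := by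
  have H : ∀ t : ℤ, 0 ≤ t →
      zavg n m (fun x => ‖f (x + Pi.single j ((t : ZMod m))) - f x‖ ^ p)
        ≤ |(t : ℝ)| ^ p * zavg n m (fun x => ‖f (x + Pi.single j 1) - f x‖ ^ p) := by
    intro t ht
    obtain ⟨u, rfl⟩ : ∃ u : ℕ, t = (u : ℤ) := ⟨t.toNat, (Int.toNat_of_nonneg ht).symm⟩
    have h1 : (((u : ℤ) : ZMod m)) = ((u : ℕ) : ZMod m) := by push_cast; rfl
    have h2 : |((u : ℤ) : ℝ)| = ((u : ℕ) : ℝ) := by push_cast; exact abs_of_nonneg (by positivity)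
    rw [h1, h2]
    exact step_single hp f j u
  rcases le_or_gt 0 t with ht | ht
  · exact H t ht
  · have hneg : -(Pi.single j ((t : ZMod m)) : Fin n → ZMod m)
        = Pi.single j (((-t : ℤ) : ZMod m)) := by
      rw [Int.cast_neg, ← Pi.single_neg]
    rw [zavg_neg_shift, hneg]
    have h := H (-t) (by omega)
    have habs : |((-t : ℤ) : ℝ)| = |(t : ℝ)| := by
      push_cast
      rw [abs_neg]
    rw [habs] at h
    exact h

lemma evenCard {k : ℕ} (hk : Odd k) :
    ((Finset.Ioo (-(k : ℤ)) (k : ℤ)).filter (fun a => Even a)).card = k := by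
  obtain ⟨r, hr⟩ := hk
  have himg : (Finset.Ioo (-(k : ℤ)) (k : ℤ)).filter (fun a => Even a)
      = (Finset.Icc (-(r : ℤ)) (r : ℤ)).image (fun b => 2 * b) := by
    ext a
    simp only [Finset.mem_filter, Finset.mem_Ioo, Finset.mem_image, Finset.mem_Icc,
      Int.even_iff]
    constructor
    · rintro ⟨⟨h1, h2⟩, h3⟩
      exact ⟨a / 2, by omega, by omega⟩
    · rintro ⟨b, ⟨hb1, hb2⟩, rfl⟩
      omega
  rw [himg, Finset.card_image_of_injective _ (fun a b h => by omega), Int.card_Icc]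
  omega

end Aux

theorem stmt6 (X : Type*) [NormedAddCommGroup X] [NormedSpace ℝ X]
    (p : ℝ) (hp : 1 ≤ p) (n m k : ℕ) [NeZero m] (hk : Odd k) (hkm : 2 * k < m)
    (hm : Even m) (f : (Fin n → ZMod m) → X) :
    (zavg n m fun x => ‖Aop X k n m f x - f x‖ ^ p)
      ≤ ((k : ℝ) - 1) ^ p * (n : ℝ) ^ (p - 1) *
        ∑ j, zavg n m fun x => ‖f (x + Pi.single j 1) - f x‖ ^ p := by
  have hk1 : 1 ≤ k := hk.pos
  have hkR : (0:ℝ) < (k:ℝ) := by exact_mod_cast hk1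
  have hK : (0:ℝ) < (k:ℝ) ^ n := by positivity
  set D : Fin n → ℝ := fun j => zavg n m fun x => ‖f (x + Pi.single j 1) - f x‖ ^ p with hD
  have hDnn : ∀ j, 0 ≤ D j := fun j =>
    zavg_nonneg (fun x => Real.rpow_nonneg (norm_nonneg _) p)
  have hcard : (evenCube k n).card = k ^ n := by
    rw [evenCube, Fintype.card_piFinset]
    simp [evenCard hk]
  -- the bound for a fixed z in the cube
  have hz_bound : ∀ z ∈ evenCube k n,
      zavg n m (fun x => ‖f (x + fun i => ((z i : ZMod m))) - f x‖ ^ p)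
        ≤ (n : ℝ) ^ (p - 1) * (((k:ℝ) - 1) ^ p * ∑ j, D j) := by
    intro z hz
    have hzi : ∀ i, -(k:ℤ) < z i ∧ z i < k := by
      intro i
      have h2 := (Fintype.mem_piFinset.mp hz) i
      rw [Finset.mem_filter, Finset.mem_Ioo] at h2
      exact h2.1
    set T : ℕ → (Fin n → ZMod m) := fun a i => if (i:ℕ) < a then ((z i : ZMod m)) else 0 with hT
    have hT0 : T 0 = 0 := funext fun i => if_neg (Nat.not_lt_zero _)
    have hTn : T n = fun i => ((z i : ZMod m)) := funext fun i => if_pos i.isLt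
    have htele := zavg_tele hp (fun a x => f (x + T a)) n
    rw [hT0, hTn] at htele
    simp only [add_zero] at htele
    set D' : ℕ → ℝ := fun a => if h : a < n then D ⟨a, h⟩ else 0 with hD'
    have hstep : ∀ a ∈ Finset.range n,
        zavg n m (fun x => ‖f (x + T (a+1)) - f (x + T a)‖ ^ p)
          ≤ ((k:ℝ) - 1) ^ p * D' a := by
      intro a ha
      rw [Finset.mem_range] at ha
      set j : Fin n := ⟨a, ha⟩ with hj
      have hsplit : T (a+1) = T a + Pi.single j ((z j : ZMod m)) := by
        funext i
        simp only [hT, Pi.add_apply, Pi.single_apply]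
        by_cases h2 : i = j
        · subst h2
          rw [if_pos rfl, if_pos (by simp [hj]), if_neg (by simp [hj])]
          rw [zero_add]
        · have hne : (i:ℕ) ≠ a := fun h => h2 (Fin.ext h)
          rw [if_neg h2, add_zero]
          by_cases h1 : (i:ℕ) < a
          · rw [if_pos h1, if_pos (by omega)]
          · rw [if_neg h1, if_neg (by omega)]
      have e1 : zavg n m (fun x => ‖f (x + T (a+1)) - f (x + T a)‖ ^ p)
          = zavg n m (fun x => ‖f ((x + T a) + Pi.single j ((z j : ZMod m)))
              - f (x + T a)‖ ^ p) :=
        zavg_congr fun x => by rw [hsplit, ← add_assoc]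
      rw [e1, zavg_shift_pair f (T a) (Pi.single j ((z j : ZMod m)))]
      refine le_trans (step_int hp f j (z j)) ?_
      have hD'a : D' a = D j := by
        simp only [hD']
        rw [dif_pos ha]
      rw [hD'a]
      apply mul_le_mul_of_nonneg_right _ (hDnn j)
      apply Real.rpow_le_rpow (by positivity) _ (by linarith)
      have h3 : |z j| ≤ (k:ℤ) - 1 := by
        have := hzi j
        rw [abs_le]
        omega
      have h4 : ((|z j| : ℤ) : ℝ) ≤ (((k:ℤ) - 1 : ℤ) : ℝ) := by exact_mod_cast h3
      rw [Int.cast_abs] at h4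
      push_cast at h4 ⊢
      linarith
    have hsumD' : ∑ a ∈ Finset.range n, D' a = ∑ j, D j := by
      rw [← Fin.sum_univ_eq_sum_range]
      exact Finset.sum_congr rfl fun i _ => by simp [hD', i.isLt]
    refine htele.trans ?_
    refine le_trans (mul_le_mul_of_nonneg_left (Finset.sum_le_sum hstep) (by positivity))
      (le_of_eq ?_)
    rw [← Finset.mul_sum, hsumD']
  -- pointwise bound for the averaging operator
  have hw' : ∑ _z ∈ evenCube k n, (((k:ℝ) ^ n))⁻¹ = 1 := by
    rw [Finset.sum_const, hcard, nsmul_eq_mul]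
    push_cast
    field_simp
  have hpoint : ∀ x, ‖Aop X k n m f x - f x‖ ^ p
      ≤ (((k:ℝ) ^ n))⁻¹ * ∑ z ∈ evenCube k n,
          ‖f (x + fun i => ((z i : ZMod m))) - f x‖ ^ p := by
    intro x
    have hrepr : Aop X k n m f x - f x
        = (((k : ℝ) ^ n)⁻¹) • ∑ z ∈ evenCube k n,
            (f (x + fun i => ((z i : ZMod m))) - f x) := by
      rw [Finset.sum_sub_distrib, smul_sub, Aop]
      congr 1
      rw [Finset.sum_const, hcard, ← Nat.cast_smul_eq_nsmul ℝ, smul_smul]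
      have : ((k : ℝ) ^ n)⁻¹ * ((k ^ n : ℕ) : ℝ) = 1 := by
        push_cast
        field_simp
      rw [this, one_smul]
    have hnorm : ‖Aop X k n m f x - f x‖
        ≤ ∑ z ∈ evenCube k n, (((k:ℝ) ^ n))⁻¹ *
            ‖f (x + fun i => ((z i : ZMod m))) - f x‖ := by
      rw [hrepr, norm_smul, Real.norm_eq_abs, abs_of_nonneg (by positivity), ← Finset.mul_sum]
      exact mul_le_mul_of_nonneg_left (norm_sum_le _ _) (by positivity)
    have hJ := Real.rpow_arith_mean_le_arith_mean_rpow (evenCube k n)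
      (fun _ => (((k:ℝ) ^ n))⁻¹)
      (fun z => ‖f (x + fun i => ((z i : ZMod m))) - f x‖)
      (fun i _ => by positivity) hw' (fun i _ => norm_nonneg _) hp
    beta_reduce at hJ
    refine le_trans (Real.rpow_le_rpow (norm_nonneg _) hnorm (by linarith)) (hJ.trans ?_)
    rw [← Finset.mul_sum]
  -- put it together
  have h1 := zavg_mono hpoint
  rw [zavg_const_mul, zavg_sum] at h1
  refine h1.trans ?_
  refine le_trans (mul_le_mul_of_nonneg_left (Finset.sum_le_sum hz_bound) (by positivity))
    (le_of_eq ?_)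
  rw [Finset.sum_const, hcard, nsmul_eq_mul]
  push_cast
  field_simp
end
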